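/- Consider in ℝ² the parametric set C(p) = {x ∈ ℝ² : ⟨x, (−1+p, 0)⟩ ≤ 0, ⟨x, (0, p)⟩ ≤ 0} for p ∈ ℝ near 0, and the projection P(p,v) of v onto C(p). For v in a neighbourhood of v̄ = (−1,−1), P(p,v) = (0,0) if −1 < p < 0 and P(p,v) = (0, v₂) if 0 ≤ p < 1. Consequently, the projection mapping P is not continuous at (p̄, v̄) = (0, (−1,−1)). -/

import Mathlib

lemma stmt_8_sqnorm (x : EuclideanSpace ℝ (Fin 2)) : ‖x‖^2 = x 0^2 + x 1^2 := by
  rw [EuclideanSpace.norm_eq, Real.sq_sqrt (by positivity)]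
  simp [Fin.sum_univ_two, sq_abs]

set_option maxHeartbeats 1000000 in
/-- Projection onto `C(p) = {x | (-1+p)x₀ ≤ 0, p·x₁ ≤ 0}` near `vbar = (-1,-1)` equals `0`
for `-1 < p < 0` and `(0, v₁)` for `0 ≤ p < 1`; hence the projection mapping is not
continuous at `(0, vbar)` even though the data are Lipschitz in `p`. -/
theorem stmt_8 (C : ℝ → Set (EuclideanSpace ℝ (Fin 2)))
    (hC : ∀ p, C p = {x : EuclideanSpace ℝ (Fin 2) |
      (-1 + p) * x 0 ≤ 0 ∧ p * x 1 ≤ 0})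
    (P : ℝ → EuclideanSpace ℝ (Fin 2) → EuclideanSpace ℝ (Fin 2))
    (hP : ∀ p v, P p v ∈ C p ∧ ∀ y ∈ C p, ‖P p v - v‖ ≤ ‖y - v‖)
    (vbar : EuclideanSpace ℝ (Fin 2)) (hvbar0 : vbar 0 = -1) (hvbar1 : vbar 1 = -1) :
    (∃ ε > (0 : ℝ), ∀ v : EuclideanSpace ℝ (Fin 2), ‖v - vbar‖ < ε →
      (∀ p : ℝ, -1 < p → p < 0 → P p v = 0) ∧
      (∀ p : ℝ, 0 ≤ p → p < 1 → (P p v) 0 = 0 ∧ (P p v) 1 = v 1)) ∧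
    ¬ ContinuousAt (fun q : ℝ × EuclideanSpace ℝ (Fin 2) => P q.1 q.2) (0, vbar) := by
  have key : ∀ v : EuclideanSpace ℝ (Fin 2), ‖v - vbar‖ < 1 →
      (∀ p : ℝ, -1 < p → p < 0 → P p v = 0) ∧
      (∀ p : ℝ, 0 ≤ p → p < 1 → (P p v) 0 = 0 ∧ (P p v) 1 = v 1) := by
    intro v hv
    -- coordinates of v are negative
    have hsq : ‖v - vbar‖^2 = (v 0 - vbar 0)^2 + (v 1 - vbar 1)^2 := by
      rw [stmt_8_sqnorm]; simp
    have hlt : ‖v - vbar‖^2 < 1 := by nlinarith [norm_nonneg (v - vbar)]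
    have hv0 : v 0 < 0 := by nlinarith [sq_nonneg (v 1 - vbar 1)]
    have hv1 : v 1 < 0 := by nlinarith [sq_nonneg (v 0 - vbar 0)]
    constructor
    · intro p hp1 hp0
      obtain ⟨hmem, hmin⟩ := hP p v
      rw [hC p] at hmem
      obtain ⟨h1, h2⟩ := hmem
      set q := P p v with hq
      have hq0 : 0 ≤ q 0 := by nlinarith
      have hq1 : 0 ≤ q 1 := by nlinarith
      have h0mem : (0 : EuclideanSpace ℝ (Fin 2)) ∈ C p := by
        rw [hC p]; constructor <;> simp
      have hle := hmin 0 h0mem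
      have hle2 : ‖q - v‖^2 ≤ ‖(0 : EuclideanSpace ℝ (Fin 2)) - v‖^2 := by
        have := norm_nonneg (q - v)
        nlinarith
      rw [stmt_8_sqnorm, stmt_8_sqnorm] at hle2
      simp only [PiLp.sub_apply, PiLp.zero_apply, zero_sub, PiLp.neg_apply] at hle2
      have e0 : q 0 = 0 := by nlinarith
      have e1 : q 1 = 0 := by nlinarith
      ext i
      fin_cases i
      · simpa using e0
      · simpa using e1
    · intro p hp0 hp1
      obtain ⟨hmem, hmin⟩ := hP p v
      rw [hC p] at hmem
      obtain ⟨h1, _⟩ := hmem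
      set q := P p v with hq
      have hq0 : 0 ≤ q 0 := by nlinarith
      set y : EuclideanSpace ℝ (Fin 2) := (WithLp.equiv 2 (Fin 2 → ℝ)).symm ![0, v 1]
        with hy
      have hy0 : y 0 = 0 := by simp [hy]
      have hy1 : y 1 = v 1 := by simp [hy]
      have hymem : y ∈ C p := by
        rw [hC p]
        refine ⟨by rw [hy0]; simp, ?_⟩
        rw [hy1]
        exact mul_nonpos_of_nonneg_of_nonpos hp0 hv1.le
      have hle := hmin y hymem
      have hle2 : ‖q - v‖^2 ≤ ‖y - v‖^2 := by
        have := norm_nonneg (q - v)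
        nlinarith
      rw [stmt_8_sqnorm, stmt_8_sqnorm] at hle2
      simp only [PiLp.sub_apply, hy0, hy1, zero_sub, sub_self] at hle2
      have hx0 := q 0
      have hh : 0 ≤ q 0 * (-(v 0)) := mul_nonneg hq0 (by linarith)
      constructor
      · nlinarith [sq_nonneg (q 1 - v 1), sq_nonneg (q 0)]
      · nlinarith [sq_nonneg (q 0), sq_nonneg (q 1 - v 1)]
  refine ⟨⟨1, one_pos, key⟩, ?_⟩
  intro hcont
  have hvb := key vbar (by simp)
  -- sequence p_n = -(1/(n+2)) → 0
  have hseq : Filter.Tendsto (fun n : ℕ => ((-(1 / (n + 2 : ℝ)), vbar) :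
      ℝ × EuclideanSpace ℝ (Fin 2))) Filter.atTop (nhds (0, vbar)) := by
    refine Filter.Tendsto.prodMk_nhds ?_ tendsto_const_nhds
    have : Filter.Tendsto (fun n : ℕ => (1 / (n + 2 : ℝ))) Filter.atTop (nhds 0) := by
      have h : Filter.Tendsto (fun n : ℕ => ((n : ℝ) + 2)) Filter.atTop Filter.atTop :=
        Filter.tendsto_atTop_add_const_right _ 2 tendsto_natCast_atTop_atTop
      simpa [one_div, Function.comp_def] using tendsto_inv_atTop_zero.comp h
    simpa using this.neg
  have hcomp := (hcont.tendsto).comp hseq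
  have heq : ∀ n : ℕ, P (-(1 / (n + 2 : ℝ))) vbar = 0 := by
    intro n
    apply hvb.1
    · have h2 : (0:ℝ) < (n:ℝ) + 2 := by positivity
      have : 1 / ((n:ℝ) + 2) ≤ 1 / 2 := by
        apply one_div_le_one_div_of_le <;> [norm_num; linarith [Nat.cast_nonneg (α := ℝ) n]]
      linarith
    · have h2 : (0:ℝ) < (n:ℝ) + 2 := by positivity
      have : 0 < 1 / ((n:ℝ) + 2) := by positivity
      linarith
  have hconst : Filter.Tendsto (fun _ : ℕ => (0 : EuclideanSpace ℝ (Fin 2)))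
      Filter.atTop (nhds (P 0 vbar)) := by
    have : (fun n : ℕ => (fun q : ℝ × EuclideanSpace ℝ (Fin 2) => P q.1 q.2)
        ((-(1 / (n + 2 : ℝ)), vbar))) = fun _ : ℕ => (0 : EuclideanSpace ℝ (Fin 2)) := by
      funext n; exact heq n
    rw [← this]
    exact hcomp
  have hP0 : P 0 vbar = 0 := tendsto_nhds_unique hconst tendsto_const_nhds
  have h1 := (hvb.2 0 le_rfl one_pos).2
  rw [hP0, hvbar1] at h1
  simp at h1
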